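/- Let p_x, p_z ∈ (0, 1/2) and set λ_x = p_x/(1-p_x), λ_z = p_z/(1-p_z). Then ((1-λ_x)/(1+λ_x))^2 = (λ_z + λ_z²)/(1+λ_z³) holds if and only if ((1-p_x)³ + p_x³)·((1-p_z)³ + p_z³) = 1/4. -/

import Mathlib

/-- BPD duality condition for `R = 3`: with `λ_x = p_x/(1-p_x)`, `λ_z = p_z/(1-p_z)`,
`((1-λ_x)/(1+λ_x))² = (λ_z+λ_z²)/(1+λ_z³)` iff `((1-p_x)³ + p_x³)((1-p_z)³ + p_z³) = 1/4`. -/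
theorem bpd_duality_R3 (px pz : ℝ) (hx : px ∈ Set.Ioo (0:ℝ) (1/2))
    (hz : pz ∈ Set.Ioo (0:ℝ) (1/2)) :
    ((1 - px/(1-px)) / (1 + px/(1-px)))^2
        = ((pz/(1-pz)) + (pz/(1-pz))^2) / (1 + (pz/(1-pz))^3)
      ↔ ((1-px)^3 + px^3) * ((1-pz)^3 + pz^3) = 1/4 := by
  obtain ⟨hx0, hx1⟩ := hx
  obtain ⟨hz0, hz1⟩ := hz
  have hpx : (1:ℝ) - px > 0 := by linarith
  have hpz : (1:ℝ) - pz > 0 := by linarith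
  have hx' : (1:ℝ) - px ≠ 0 := ne_of_gt hpx
  have hz' : (1:ℝ) - pz ≠ 0 := ne_of_gt hpz
  have hfac : (1-px)^2 * (1-pz)^3 > 0 := by positivity
  rw [div_pow, div_eq_div_iff (by positivity) (by positivity)]
  field_simp
  constructor <;> intro h
  · have key : (((1-px)^3 + px^3) * ((1-pz)^3 + pz^3) * 4 - 1) * ((1-px)^2 * (1-pz)^3) = 0 := by
      linear_combination 3 * ((1-px)^2 * (1-pz)^3) * h
    rcases mul_eq_zero.mp key with h' | h'
    · linarith
    · exact absurd h' (ne_of_gt hfac)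
  · linear_combination h / 3
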